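/- Let E ∈ ℝ, ρ > 0, and ξ ∈ ℝ³ with |ξ| ≤ 2√(E+ρ²) (assuming E + ρ² > 0). Then there exist k, l ∈ ℂ³ with k² = l² = E (as complex quadratic form k₁²+k₂²+k₃²), Im k = Im l, |Im k| = |Im l| = ρ, and k - l = ξ. -/

import Mathlib

open Real

theorem stmt10 (E ρ : ℝ) (hρ : 0 < ρ) (hE : 0 < E + ρ ^ 2)
    (ξ : EuclideanSpace ℝ (Fin 3)) (hξ : ‖ξ‖ ≤ 2 * Real.sqrt (E + ρ ^ 2)) :
    ∃ k l : Fin 3 → ℂ,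
      (∑ i, (k i) ^ 2) = (E : ℂ) ∧
      (∑ i, (l i) ^ 2) = (E : ℂ) ∧
      (∀ i, (k i).im = (l i).im) ∧
      Real.sqrt (∑ i, (k i).im ^ 2) = ρ ∧
      Real.sqrt (∑ i, (l i).im ^ 2) = ρ ∧
      (∀ i, k i - l i = (ξ i : ℂ)) := by
  -- get an orthonormal family with ξ = ‖ξ‖ • u 0
  obtain ⟨u, hu_on, hu0⟩ :
      ∃ u : Fin 3 → EuclideanSpace ℝ (Fin 3), Orthonormal ℝ u ∧ ξ = ‖ξ‖ • u 0 := by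
    by_cases h0 : ξ = 0
    · refine ⟨⇑(EuclideanSpace.basisFun (Fin 3) ℝ), (EuclideanSpace.basisFun (Fin 3) ℝ).orthonormal, ?_⟩
      simp [h0]
    · have hne : ‖ξ‖ ≠ 0 := norm_ne_zero_iff.mpr h0
      have hv : Orthonormal ℝ (({0} : Set (Fin 3)).restrict (fun _ : Fin 3 => ‖ξ‖⁻¹ • ξ)) := by
        rw [orthonormal_iff_ite]
        intro i j
        have : i = j := Subtype.ext (i.2.trans j.2.symm)
        subst this
        simp only [Set.restrict_apply, if_pos rfl]
        show (inner ℝ (‖ξ‖⁻¹ • ξ) (‖ξ‖⁻¹ • ξ) : ℝ) = 1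
        rw [real_inner_smul_left, real_inner_smul_right,
          real_inner_self_eq_norm_sq]
        field_simp
      obtain ⟨b, hb⟩ := hv.exists_orthonormalBasis_extension_of_card_eq
        (by simp [finrank_euclideanSpace]) 
      refine ⟨⇑b, b.orthonormal, ?_⟩
      rw [hb 0 rfl, smul_smul]
      field_simp
      rw [one_smul]
  -- orthonormality as real sums
  have hS : ∀ i j : Fin 3, u i 0 * u j 0 + u i 1 * u j 1 + u i 2 * u j 2
      = if i = j then 1 else 0 := by
    intro i j
    have := orthonormal_iff_ite.mp hu_on i j
    simp [PiLp.inner_apply, RCLike.inner_apply, Fin.sum_univ_three] at this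
    linear_combination this
  have h00 : u 0 0 * u 0 0 + u 0 1 * u 0 1 + u 0 2 * u 0 2 = 1 := by simpa using hS 0 0
  have h11 : u 1 0 * u 1 0 + u 1 1 * u 1 1 + u 1 2 * u 1 2 = 1 := by simpa using hS 1 1
  have h22 : u 2 0 * u 2 0 + u 2 1 * u 2 1 + u 2 2 * u 2 2 = 1 := by simpa using hS 2 2
  have h01 : u 0 0 * u 1 0 + u 0 1 * u 1 1 + u 0 2 * u 1 2 = 0 := by simpa using hS 0 1
  have h02 : u 0 0 * u 2 0 + u 0 1 * u 2 1 + u 0 2 * u 2 2 = 0 := by simpa using hS 0 2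
  have h12 : u 1 0 * u 2 0 + u 1 1 * u 2 1 + u 1 2 * u 2 2 = 0 := by simpa using hS 1 2
  set a := ‖ξ‖ / 2 with ha_def
  have ha0 : 0 ≤ a := by positivity
  have hsq : Real.sqrt (E + ρ ^ 2) ^ 2 = E + ρ ^ 2 := Real.sq_sqrt hE.le
  have ha : a ^ 2 ≤ E + ρ ^ 2 := by
    have h1 : a ≤ Real.sqrt (E + ρ ^ 2) := by rw [ha_def]; linarith
    nlinarith [Real.sqrt_nonneg (E + ρ ^ 2)]
  set t := Real.sqrt (E + ρ ^ 2 - a ^ 2) with ht_def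
  have ht2 : t ^ 2 = E + ρ ^ 2 - a ^ 2 := Real.sq_sqrt (by linarith)
  have hxi : ∀ i, ξ i = 2 * a * u 0 i := by
    intro i
    rw [hu0]
    show ‖ξ‖ * u 0 i = 2 * a * u 0 i
    rw [ha_def]; ring
  refine ⟨fun i => ((a * u 0 i + t * u 1 i : ℝ) : ℂ) + ((ρ * u 2 i : ℝ) : ℂ) * Complex.I,
          fun i => ((-a * u 0 i + t * u 1 i : ℝ) : ℂ) + ((ρ * u 2 i : ℝ) : ℂ) * Complex.I,
          ?_, ?_, ?_, ?_, ?_, ?_⟩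
  · rw [Fin.sum_univ_three, Complex.ext_iff]
    constructor
    · simp only [pow_two, Complex.add_re, Complex.mul_re, Complex.ofReal_re, Complex.ofReal_im,
        Complex.I_re, Complex.I_im, Complex.add_im, Complex.mul_im]
      linear_combination a^2*h00 + t^2*h11 - ρ^2*h22 + 2*a*t*h01 + ht2
    · simp only [pow_two, Complex.add_re, Complex.mul_re, Complex.ofReal_re, Complex.ofReal_im,
        Complex.I_re, Complex.I_im, Complex.add_im, Complex.mul_im]
      linear_combination 2*a*ρ*h02 + 2*t*ρ*h12
  · rw [Fin.sum_univ_three, Complex.ext_iff]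
    constructor
    · simp only [pow_two, Complex.add_re, Complex.mul_re, Complex.ofReal_re, Complex.ofReal_im,
        Complex.I_re, Complex.I_im, Complex.add_im, Complex.mul_im]
      linear_combination a^2*h00 + t^2*h11 - ρ^2*h22 - 2*a*t*h01 + ht2
    · simp only [pow_two, Complex.add_re, Complex.mul_re, Complex.ofReal_re, Complex.ofReal_im,
        Complex.I_re, Complex.I_im, Complex.add_im, Complex.mul_im]
      linear_combination -2*a*ρ*h02 + 2*t*ρ*h12
  · intro i; simp
  · have hsum : (∑ i : Fin 3, (((a * u 0 i + t * u 1 i : ℝ) : ℂ)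
        + ((ρ * u 2 i : ℝ) : ℂ) * Complex.I).im ^ 2) = ρ ^ 2 := by
      rw [Fin.sum_univ_three]
      simp only [Complex.add_im, Complex.mul_im, Complex.ofReal_re, Complex.ofReal_im,
        Complex.I_re, Complex.I_im]
      linear_combination ρ^2*h22
    rw [hsum, Real.sqrt_sq hρ.le]
  · have hsum : (∑ i : Fin 3, (((-a * u 0 i + t * u 1 i : ℝ) : ℂ)
        + ((ρ * u 2 i : ℝ) : ℂ) * Complex.I).im ^ 2) = ρ ^ 2 := by
      rw [Fin.sum_univ_three]
      simp only [Complex.add_im, Complex.mul_im, Complex.ofReal_re, Complex.ofReal_im,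
        Complex.I_re, Complex.I_im]
      linear_combination ρ^2*h22
    rw [hsum, Real.sqrt_sq hρ.le]
  · intro i
    rw [hxi i]
    push_cast
    ring
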